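/- Identification region of the average treatment effect with outcomes in [0,1]: let ℓ0 be a probability measure on ℝ × Bool whose first coordinate lies in [0,1] ℓ0-almost surely; set γ = ℓ0({(y, z) : z = true}) and a = ∫ (if z then y else −y) dℓ0(y, z). Then the set { ∫ (y1 − y0) dμ : μ a probability measure on Bool × ℝ × ℝ with (y1, y0) ∈ [0,1] × [0,1] μ-almost surely whose pushforward under s ↦ (if z then y1 else y0, z) equals ℓ0 } equals the closed interval [a − γ, a + (1 − γ)]. -/

import Mathlib

open MeasureTheory

lemma ate_g_meas : Measurable (fun s : Bool × ℝ × ℝ => ((if s.1 then s.2.1 else s.2.2), s.1)) := by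
  apply Measurable.prod _ measurable_fst
  exact Measurable.ite (measurable_fst (measurableSet_singleton true))
    (measurable_fst.comp measurable_snd) (measurable_snd.comp measurable_snd)

lemma ate_F_meas : Measurable (fun s : Bool × ℝ × ℝ => if s.1 then s.2.1 else -s.2.2) :=
  Measurable.ite (measurable_fst (measurableSet_singleton true))
    (measurable_fst.comp measurable_snd) (measurable_snd.comp measurable_snd).neg

lemma ate_G_meas : Measurable (fun s : Bool × ℝ × ℝ => if s.1 then -s.2.2 else s.2.1) :=
  Measurable.ite (measurable_fst (measurableSet_singleton true))
    (measurable_snd.comp measurable_snd).neg (measurable_fst.comp measurable_snd)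

lemma ate_F0_meas : Measurable (fun p : ℝ × Bool => if p.2 then p.1 else -p.1) :=
  Measurable.ite (measurable_snd (measurableSet_singleton true)) measurable_fst measurable_fst.neg

/-- identification region of the ATE with outcomes in `[0,1]`: for a
probability measure `ℓ₀` on `ℝ × Bool` whose first coordinate is a.s. in `[0,1]`, with
`γ = ℓ₀({z = true})` and `a = ∫ (if z then y else −y) dℓ₀`, the set of average treatment
effects `∫ (y1 − y0) dμ` over all probability measures `μ` on `Bool × ℝ × ℝ` with
potential outcomes a.s. in `[0,1] × [0,1]` and with law of `(Y*, Z)` equal to `ℓ₀`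
is the closed interval `[a − γ, a + (1 − γ)]`. -/
theorem ate_identification_region_bounded_outcomes
    (ℓ₀ : Measure (ℝ × Bool)) [IsProbabilityMeasure ℓ₀]
    (hsupp : ∀ᵐ p ∂ℓ₀, p.1 ∈ Set.Icc (0:ℝ) 1)
    (γ a : ℝ)
    (hγ : γ = (ℓ₀ {p : ℝ × Bool | p.2 = true}).toReal)
    (ha : a = ∫ p : ℝ × Bool, (if p.2 then p.1 else -p.1) ∂ℓ₀) :
    {x : ℝ | ∃ μ : Measure (Bool × ℝ × ℝ), IsProbabilityMeasure μ ∧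
        (∀ᵐ s ∂μ, s.2.1 ∈ Set.Icc (0:ℝ) 1 ∧ s.2.2 ∈ Set.Icc (0:ℝ) 1) ∧
        Measure.map (fun s : Bool × ℝ × ℝ => ((if s.1 then s.2.1 else s.2.2), s.1)) μ = ℓ₀ ∧
        x = ∫ s : Bool × ℝ × ℝ, (s.2.1 - s.2.2) ∂μ} =
      Set.Icc (a - γ) (a + (1 - γ)) := by
  have hTset : MeasurableSet {p : ℝ × Bool | p.2 = true} :=
    measurable_snd (measurableSet_singleton true)
  ext x
  simp only [Set.mem_setOf_eq, Set.mem_Icc]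
  constructor
  · rintro ⟨μ, hprob, hae, hmap, hx⟩
    -- set of treated in μ
    have hμT : (μ {s : Bool × ℝ × ℝ | s.1 = true}).toReal = γ := by
      rw [hγ, ← hmap, Measure.map_apply ate_g_meas hTset]
      rfl
    -- integrability of F and G
    have hFint : Integrable (fun s : Bool × ℝ × ℝ => if s.1 then s.2.1 else -s.2.2) μ := by
      refine (integrable_const (1:ℝ)).mono' ate_F_meas.aestronglyMeasurable ?_
      filter_upwards [hae] with s hs
      rcases hs with ⟨⟨h10, h11⟩, h00, h01⟩
      cases s.1 <;> simp [abs_le] <;> constructor <;> linarith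
    have hGint : Integrable (fun s : Bool × ℝ × ℝ => if s.1 then -s.2.2 else s.2.1) μ := by
      refine (integrable_const (1:ℝ)).mono' ate_G_meas.aestronglyMeasurable ?_
      filter_upwards [hae] with s hs
      rcases hs with ⟨⟨h10, h11⟩, h00, h01⟩
      cases s.1 <;> simp [abs_le] <;> constructor <;> linarith
    -- splitting the ATE
    have hsplit : x = (∫ s : Bool × ℝ × ℝ, (if s.1 then s.2.1 else -s.2.2) ∂μ)
        + ∫ s : Bool × ℝ × ℝ, (if s.1 then -s.2.2 else s.2.1) ∂μ := by
      rw [hx, ← integral_add hFint hGint]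
      refine integral_congr_ae (Filter.Eventually.of_forall fun s => ?_)
      rcases s with ⟨z, y1, y0⟩
      cases z <;> simp <;> ring
    -- first term equals a
    have hFa : (∫ s : Bool × ℝ × ℝ, (if s.1 then s.2.1 else -s.2.2) ∂μ) = a := by
      rw [ha, ← hmap, integral_map ate_g_meas.aemeasurable ate_F0_meas.aestronglyMeasurable]
      refine integral_congr_ae (Filter.Eventually.of_forall fun s => ?_)
      rcases s with ⟨z, y1, y0⟩
      cases z <;> simp
    -- indicator facts
    have hSset : MeasurableSet {s : Bool × ℝ × ℝ | s.1 = true} :=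
      measurable_fst (measurableSet_singleton true)
    have hIndInt : Integrable ({s : Bool × ℝ × ℝ | s.1 = true}.indicator fun _ => (1:ℝ)) μ :=
      (integrable_const (1:ℝ)).indicator hSset
    have hIndVal : (∫ s : Bool × ℝ × ℝ,
        ({s : Bool × ℝ × ℝ | s.1 = true}.indicator fun _ => (1:ℝ)) s ∂μ) = γ := by
      rw [integral_indicator_const (1:ℝ) hSset, smul_eq_mul, mul_one, measureReal_def, hμT]
    have hScset : MeasurableSet {s : Bool × ℝ × ℝ | s.1 = false} :=
      measurable_fst (measurableSet_singleton false)
    have hIndInt' : Integrable ({s : Bool × ℝ × ℝ | s.1 = false}.indicator fun _ => (1:ℝ)) μ :=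
      (integrable_const (1:ℝ)).indicator hScset
    have hcompl : (μ {s : Bool × ℝ × ℝ | s.1 = false}).toReal = 1 - γ := by
      have h1 : {s : Bool × ℝ × ℝ | s.1 = false} = {s : Bool × ℝ × ℝ | s.1 = true}ᶜ := by
        ext s; cases s.1 <;> simp
      rw [h1, measure_compl hSset (measure_ne_top μ _), measure_univ,
        ENNReal.toReal_sub_of_le prob_le_one ENNReal.one_ne_top, ENNReal.toReal_one, hμT]
    have hIndVal' : (∫ s : Bool × ℝ × ℝ,
        ({s : Bool × ℝ × ℝ | s.1 = false}.indicator fun _ => (1:ℝ)) s ∂μ) = 1 - γ := by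
      rw [integral_indicator_const (1:ℝ) hScset, smul_eq_mul, mul_one, measureReal_def, hcompl]
    -- bounds on the second term
    have hGlow : -γ ≤ ∫ s : Bool × ℝ × ℝ, (if s.1 then -s.2.2 else s.2.1) ∂μ := by
      rw [← hIndVal, ← integral_neg]
      refine integral_mono_ae hIndInt.neg hGint ?_
      filter_upwards [hae] with s hs
      rcases hs with ⟨⟨h10, h11⟩, h00, h01⟩
      rcases s with ⟨z, y1, y0⟩
      cases z <;> simp_all [Set.indicator]
    have hGhigh : (∫ s : Bool × ℝ × ℝ, (if s.1 then -s.2.2 else s.2.1) ∂μ) ≤ 1 - γ := by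
      rw [← hIndVal']
      refine integral_mono_ae hGint hIndInt' ?_
      filter_upwards [hae] with s hs
      rcases hs with ⟨⟨h10, h11⟩, h00, h01⟩
      rcases s with ⟨z, y1, y0⟩
      cases z <;> simp_all [Set.indicator] <;> linarith
    rw [hsplit, hFa]
    constructor <;> linarith
  · rintro ⟨hlo, hhi⟩
    set s0 : ℝ := x - a + γ with hs0def
    have hs00 : 0 ≤ s0 := by simp [hs0def]; linarith
    have hs01 : s0 ≤ 1 := by simp [hs0def]; linarith
    set f : ℝ × Bool → Bool × ℝ × ℝ :=
      fun p => (p.2, (if p.2 then p.1 else s0), (if p.2 then 1 - s0 else p.1)) with hfdef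
    have hf : Measurable f := by
      apply Measurable.prod measurable_snd
      apply Measurable.prod
      · exact Measurable.ite (measurable_snd (measurableSet_singleton true))
          measurable_fst measurable_const
      · exact Measurable.ite (measurable_snd (measurableSet_singleton true))
          measurable_const measurable_fst
    refine ⟨Measure.map f ℓ₀, Measure.isProbabilityMeasure_map hf.aemeasurable, ?_, ?_, ?_⟩
    · have hS : MeasurableSet {s : Bool × ℝ × ℝ |
          s.2.1 ∈ Set.Icc (0:ℝ) 1 ∧ s.2.2 ∈ Set.Icc (0:ℝ) 1} := by
        exact ((measurable_fst.comp measurable_snd) measurableSet_Icc).inter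
          ((measurable_snd.comp measurable_snd) measurableSet_Icc)
      have h2 : ∀ᵐ s ∂Measure.map f ℓ₀, s ∈ {s : Bool × ℝ × ℝ |
          s.2.1 ∈ Set.Icc (0:ℝ) 1 ∧ s.2.2 ∈ Set.Icc (0:ℝ) 1} := by
        refine (ae_map_iff hf.aemeasurable hS).mpr ?_
        filter_upwards [hsupp] with p hp
        rcases p with ⟨y, z⟩
        rcases hp with ⟨h0, h1⟩
        cases z <;> simp [hfdef] <;> constructor <;> constructor <;> linarith
      filter_upwards [h2] with s hs
      exact hs
    · rw [Measure.map_map ate_g_meas hf]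
      have : (fun s : Bool × ℝ × ℝ => ((if s.1 then s.2.1 else s.2.2), s.1)) ∘ f = id := by
        funext p
        rcases p with ⟨y, z⟩
        cases z <;> rfl
      rw [this, Measure.map_id]
    · have hφ : AEStronglyMeasurable (fun s : Bool × ℝ × ℝ => s.2.1 - s.2.2)
          (Measure.map f ℓ₀) :=
        (by fun_prop : Measurable fun s : Bool × ℝ × ℝ => s.2.1 - s.2.2).aestronglyMeasurable
      rw [show (∫ s : Bool × ℝ × ℝ, (s.2.1 - s.2.2) ∂Measure.map f ℓ₀)
          = ∫ p : ℝ × Bool, ((f p).2.1 - (f p).2.2) ∂ℓ₀ from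
        integral_map hf.aemeasurable hφ]
      have heq : (fun p : ℝ × Bool => (f p).2.1 - (f p).2.2)
          = fun p : ℝ × Bool => (if p.2 then p.1 else -p.1)
            + (s0 - ({p : ℝ × Bool | p.2 = true}.indicator (fun _ => (1:ℝ)) p)) := by
        funext p
        rcases p with ⟨y, z⟩
        cases z <;> simp [hfdef, Set.indicator] <;> ring
      have hF0int : Integrable (fun p : ℝ × Bool => if p.2 then p.1 else -p.1) ℓ₀ := by
        refine (integrable_const (1:ℝ)).mono' ate_F0_meas.aestronglyMeasurable ?_
        filter_upwards [hsupp] with p hp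
        rcases hp with ⟨h0, h1⟩
        cases p.2 <;> simp [abs_le] <;> constructor <;> linarith
      have hG0int : Integrable (fun p : ℝ × Bool =>
          s0 - ({p : ℝ × Bool | p.2 = true}.indicator (fun _ => (1:ℝ)) p)) ℓ₀ :=
        (integrable_const s0).sub ((integrable_const (1:ℝ)).indicator hTset)
      rw [show (∫ p : ℝ × Bool, ((f p).2.1 - (f p).2.2) ∂ℓ₀)
          = ∫ p : ℝ × Bool, ((if p.2 then p.1 else -p.1)
            + (s0 - ({p : ℝ × Bool | p.2 = true}.indicator (fun _ => (1:ℝ)) p))) ∂ℓ₀ from by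
          rw [← heq]]
      rw [integral_add hF0int hG0int, integral_sub (integrable_const s0)
        ((integrable_const (1:ℝ)).indicator hTset), integral_const,
        integral_indicator_const (1:ℝ) hTset, measureReal_def, measureReal_def, measure_univ]
      simp only [← ha, ← hγ, hs0def, smul_eq_mul, mul_one, ENNReal.toReal_one, one_mul]
      ring
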